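/- Let I ≥ 2 and J ≥ 0, and for each j = 0,1,…,J let ρ_j(x) = sup_{q ∈ Θ_I} { −qᵀx − α_j(q) }, where α_j(q) = Σ_{i=1}^I A_{i,j}(q_i), A_{i,j}(p) = ∫₀^p f_{i,j}(s) ds, and each f_{i,j} : (0,1] → ℝ is differentiable, strictly increasing, integrable near 0, with f_{i,j}(1) finite and lim_{q→0⁺} f_{i,j}(q) = −∞. Then for every c ∈ ℝ: (i) the infimum of Σ_{j=0}^J ρ_j(x_j) over all (x_0,…,x_J) ∈ (ℝ^I)^{J+1} with Σ_{j=0}^J x_j = c·e equals −c − min_{q ∈ Θ_I} Σ_{j=0}^J α_j(q); and (ii) if (x*_0,…,x*_J) attains this infimum, then for every j the supremum defining ρ_j(x*_j) is attained at the same point q* ∈ Θ_I, namely the unique minimizer of q ↦ Σ_{j=0}^J α_j(q) over Θ_I; equivalently, −∇ρ_j(x*_j) = q* for every j. In particular, the limiting price of the risk-measure-based market is p* = −∇ρ_0(y*) = arg min_{q ∈ Θ_I} Σ_{j=0}^J α_j(q), where y* = x*_0. -/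

import Mathlib

/-- The probability simplex in `ℝ^I`. -/
def simplex (I : ℕ) : Set (Fin I → ℝ) := {q | (∀ i, 0 ≤ q i) ∧ ∑ i, q i = 1}

/-- `penaltyA f p = ∫₀^p f(s) ds`. -/
noncomputable def penaltyA (f : ℝ → ℝ) (p : ℝ) : ℝ := ∫ s in (0 : ℝ)..p, f s

/-- The separable penalty function `α(q) = Σᵢ ∫₀^{qᵢ} fᵢ`. -/
noncomputable def pen (I : ℕ) (g : Fin I → ℝ → ℝ) (q : Fin I → ℝ) : ℝ :=
  ∑ i, penaltyA (g i) (q i)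

/-- The risk measure `ρ(x) = sup_{q ∈ Θ_I} { -qᵀx - α(q) }`. -/
noncomputable def rho (I : ℕ) (f : Fin I → ℝ → ℝ) (x : Fin I → ℝ) : ℝ :=
  sSup {v : ℝ | ∃ q ∈ simplex I, v = -(∑ i, q i * x i) - pen I f q}

open MeasureTheory Set

section helpers

lemma intInt {g : ℝ → ℝ} (hint : ∀ p ∈ Set.Icc (0:ℝ) 1, IntervalIntegrable g volume 0 p)
    {a b : ℝ} (ha : a ∈ Set.Icc (0:ℝ) 1) (hb : b ∈ Set.Icc (0:ℝ) 1) :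
    IntervalIntegrable g volume a b :=
  (hint a ha).symm.trans (hint b hb)

lemma conv_le {g : ℝ → ℝ} (hmono : StrictMonoOn g (Set.Ioc (0:ℝ) 1))
    (hint : ∀ p ∈ Set.Icc (0:ℝ) 1, IntervalIntegrable g volume 0 p)
    {a b : ℝ} (ha : a ∈ Set.Ioc (0:ℝ) 1) (hb : b ∈ Set.Icc (0:ℝ) 1) :
    (b - a) * g a ≤ ∫ s in a..b, g s := by
  have hmo := hmono.monotoneOn
  have hai : a ∈ Set.Icc (0:ℝ) 1 := ⟨le_of_lt ha.1, ha.2⟩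
  have hgi := intInt hint hai hb
  rcases le_or_gt a b with hab | hba
  · have h1 : ∫ _ in a..b, (g a) ≤ ∫ s in a..b, g s := by
      apply intervalIntegral.integral_mono_on hab intervalIntegrable_const hgi
      intro x hx
      exact hmo ha ⟨lt_of_lt_of_le ha.1 hx.1, hx.2.trans hb.2⟩ hx.1
    simpa [intervalIntegral.integral_const, smul_eq_mul] using h1
  · have key : ∫ s in b..a, g s ≤ ∫ _ in b..a, (g a) := by
      apply intervalIntegral.integral_mono_ae_restrict hba.le hgi.symm intervalIntegrable_const
      show ∀ᵐ x ∂volume.restrict (Set.Icc b a), g x ≤ g a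
      rw [MeasureTheory.ae_restrict_iff' measurableSet_Icc]
      refine MeasureTheory.ae_iff.mpr
        (MeasureTheory.measure_mono_null ?_ (MeasureTheory.measure_singleton b))
      intro x hx
      rw [Set.mem_setOf_eq, Classical.not_imp] at hx
      by_contra hxb
      have hxI : x ∈ Set.Ioc (0:ℝ) 1 :=
        ⟨lt_of_le_of_lt hb.1 (lt_of_le_of_ne hx.1.1 (fun h => hxb (by simp [h.symm]))),
          hx.1.2.trans ha.2⟩
      exact hx.2 (hmo hxI ha hx.1.2)
    rw [intervalIntegral.integral_symm]
    rw [intervalIntegral.integral_const] at key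
    simp only [smul_eq_mul] at key
    linarith

lemma conv_lt {g : ℝ → ℝ} (hmono : StrictMonoOn g (Set.Ioc (0:ℝ) 1))
    (hint : ∀ p ∈ Set.Icc (0:ℝ) 1, IntervalIntegrable g volume 0 p)
    {a b : ℝ} (ha : a ∈ Set.Ioc (0:ℝ) 1) (hb : b ≤ 1) (hab : a < b) :
    (b - a) * g a < ∫ s in a..b, g s := by
  set m := (a + b) / 2 with hm
  have ham : a < m := by simp [hm]; linarith
  have hmb : m < b := by simp [hm]; linarith
  have hmI : m ∈ Set.Ioc (0:ℝ) 1 := ⟨ha.1.trans ham, hmb.le.trans hb⟩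
  have hbI : b ∈ Set.Icc (0:ℝ) 1 := ⟨(ha.1.trans hab).le, hb⟩
  have hmIc : m ∈ Set.Icc (0:ℝ) 1 := ⟨hmI.1.le, hmI.2⟩
  have haIc : a ∈ Set.Icc (0:ℝ) 1 := ⟨ha.1.le, ha.2⟩
  have h1 : (m - a) * g a ≤ ∫ s in a..m, g s := conv_le hmono hint ha hmIc
  have h2 : (b - m) * g m ≤ ∫ s in m..b, g s := conv_le hmono hint hmI hbI
  have h3 : g a < g m := hmono ha hmI ham
  have hsplit : (∫ s in a..m, g s) + ∫ s in m..b, g s = ∫ s in a..b, g s :=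
    intervalIntegral.integral_add_adjacent_intervals (intInt hint haIc hmIc) (intInt hint hmIc hbI)
  nlinarith

lemma small_int {g : ℝ → ℝ} (hmono : StrictMonoOn g (Set.Ioc (0:ℝ) 1))
    (hint : ∀ p ∈ Set.Icc (0:ℝ) 1, IntervalIntegrable g volume 0 p)
    {e : ℝ} (he : e ∈ Set.Ioc (0:ℝ) 1) :
    ∫ s in (0:ℝ)..e, g s ≤ e * g e := by
  have := conv_le hmono hint he (Set.left_mem_Icc.mpr zero_le_one)
  rw [intervalIntegral.integral_symm] at this
  linarith

lemma penA_cont {g : ℝ → ℝ}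
    (hint : ∀ p ∈ Set.Icc (0:ℝ) 1, IntervalIntegrable g volume 0 p) :
    ContinuousOn (penaltyA g) (Set.Icc 0 1) := by
  have h := intervalIntegral.continuousOn_primitive_interval'
    (hint 1 ⟨zero_le_one, le_rfl⟩) (a := 0) (by simp)
  show ContinuousOn (fun b => ∫ s in (0:ℝ)..b, g s) (Set.Icc 0 1)
  simpa [Set.uIcc_of_le (zero_le_one' ℝ), penaltyA] using h

lemma penA_diff {g : ℝ → ℝ}
    (hint : ∀ p ∈ Set.Icc (0:ℝ) 1, IntervalIntegrable g volume 0 p)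
    {a b : ℝ} (ha : a ∈ Set.Icc (0:ℝ) 1) (hb : b ∈ Set.Icc (0:ℝ) 1) :
    penaltyA g b - penaltyA g a = ∫ s in a..b, g s :=
  intervalIntegral.integral_interval_sub_left (hint b hb) (hint a ha)

lemma shift_mem {I : ℕ} {q : Fin I → ℝ} (hq : q ∈ simplex I) {k m : Fin I} (hkm : k ≠ m)
    {ε : ℝ} (hε : 0 ≤ ε) (hεm : ε ≤ q m) :
    (fun i => q i + (if i = k then ε else 0) - (if i = m then ε else 0)) ∈ simplex I := by
  constructor
  · intro i
    by_cases hik : i = k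
    · subst hik; simp [hkm, hq.1 i]; linarith [hq.1 i]
    · by_cases him : i = m
      · subst him; simp [hik]; linarith
      · simp [hik, him, hq.1 i]
  · simp only [sub_eq_add_neg, Finset.sum_add_distrib, Finset.sum_neg_distrib,
      Finset.sum_ite_eq' Finset.univ, Finset.mem_univ, if_true, hq.2]
    ring

lemma pen_shift {I : ℕ} (g : Fin I → ℝ → ℝ) (q : Fin I → ℝ) {k m : Fin I} (hkm : k ≠ m)
    (ε : ℝ) :
    pen I g (fun i => q i + (if i = k then ε else 0) - (if i = m then ε else 0))
      = pen I g q + (penaltyA (g k) (q k + ε) - penaltyA (g k) (q k))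
        + (penaltyA (g m) (q m - ε) - penaltyA (g m) (q m)) := by
  simp only [pen]
  have h0 : ∀ i, i ≠ k → i ≠ m →
      ((q i + if i = k then ε else 0) - if i = m then ε else 0) = q i := by
    intro i h1 h2; simp [h1, h2]
  have key : (∑ i, (penaltyA (g i) ((q i + if i = k then ε else 0) - if i = m then ε else 0)
        - penaltyA (g i) (q i)))
      = ∑ i ∈ ({k, m} : Finset (Fin I)),
        (penaltyA (g i) ((q i + if i = k then ε else 0) - if i = m then ε else 0)
          - penaltyA (g i) (q i)) := by
    refine (Finset.sum_subset (Finset.subset_univ _) ?_).symm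
    intro i _ hi
    simp only [Finset.mem_insert, Finset.mem_singleton, not_or] at hi
    rw [h0 i hi.1 hi.2]; ring
  rw [Finset.sum_sub_distrib, Finset.sum_pair hkm] at key
  have e1 : ((q k + if k = k then ε else 0) - if k = m then ε else 0) = q k + ε := by
    simp [hkm]
  have e2 : ((q m + if m = k then ε else 0) - if m = m then ε else 0) = q m - ε := by
    simp [Ne.symm hkm]
  rw [e1, e2] at key
  linarith

end helpers

/-- In a risk-measure-based market, the minimal aggregate risk subject to
total wealth `c·e` equals `-c - min_q Σⱼ αⱼ(q)`, and at any optimal allocation every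
risk measure's defining supremum is attained at the same unique minimizer `q*`, which
is the limiting price. -/
theorem stmt_11 (I J : ℕ) (hI : 2 ≤ I) (f : Fin (J + 1) → Fin I → ℝ → ℝ)
    (hdiff : ∀ j i, DifferentiableOn ℝ (f j i) (Set.Ioc (0 : ℝ) 1))
    (hmono : ∀ j i, StrictMonoOn (f j i) (Set.Ioc (0 : ℝ) 1))
    (hlim : ∀ j i, Filter.Tendsto (f j i) (nhdsWithin 0 (Set.Ioi 0)) Filter.atBot)
    (hint : ∀ j i, ∀ p ∈ Set.Icc (0 : ℝ) 1,
      IntervalIntegrable (f j i) MeasureTheory.volume 0 p)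
    (c : ℝ) :
    ∃ qstar ∈ simplex I,
      -- `qstar` is the unique minimizer of the aggregate penalty
      (∀ q ∈ simplex I, (∑ j, pen I (f j) qstar) ≤ ∑ j, pen I (f j) q) ∧
      (∀ q ∈ simplex I, (∑ j, pen I (f j) q) = (∑ j, pen I (f j) qstar) → q = qstar) ∧
      -- (i) value of the infimum of the aggregate risk
      IsGLB {v : ℝ | ∃ xs : Fin (J + 1) → Fin I → ℝ,
          (∑ j, xs j) = c • (1 : Fin I → ℝ) ∧ v = ∑ j, rho I (f j) (xs j)}
        (-c - ∑ j, pen I (f j) qstar) ∧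
      -- (ii) at any optimal allocation each supremum is attained at `qstar`
      (∀ xs : Fin (J + 1) → Fin I → ℝ, (∑ j, xs j) = c • (1 : Fin I → ℝ) →
        (∑ j, rho I (f j) (xs j)) = -c - ∑ j, pen I (f j) qstar →
        ∀ j, IsGreatest {v : ℝ | ∃ q ∈ simplex I, v = -(∑ i, q i * xs j i) - pen I (f j) q}
          (-(∑ i, qstar i * xs j i) - pen I (f j) qstar)) := by
  classical
  have hI0 : 0 < I := by omega
  have hIcc : ∀ q ∈ simplex I, ∀ i, q i ∈ Set.Icc (0:ℝ) 1 := by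
    intro q hq i
    refine ⟨hq.1 i, ?_⟩
    calc q i ≤ ∑ i', q i' :=
          Finset.single_le_sum (fun i' _ => hq.1 i') (Finset.mem_univ i)
      _ = 1 := hq.2
  have hcomp : IsCompact (simplex I) := isCompact_stdSimplex ℝ (Fin I)
  have hne : (simplex I).Nonempty := by
    refine ⟨fun _ => (I:ℝ)⁻¹, fun i => by positivity, ?_⟩
    simp only [Finset.sum_const, Finset.card_univ, Fintype.card_fin, nsmul_eq_mul]
    field_simp
  have hpencont : ∀ (g : Fin I → ℝ → ℝ),
      (∀ i, ∀ p ∈ Set.Icc (0:ℝ) 1, IntervalIntegrable (g i) volume 0 p) →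
      ContinuousOn (pen I g) (simplex I) := by
    intro g hgint
    apply continuousOn_finset_sum
    intro i _
    exact (penA_cont (hgint i)).comp (continuous_apply i).continuousOn
      (fun q hq => hIcc q hq i)
  have hΦcont : ContinuousOn (fun q => ∑ j, pen I (f j) q) (simplex I) :=
    continuousOn_finset_sum _ (fun j _ => hpencont (f j) (hint j))
  obtain ⟨qs, hqsm, hqmin⟩ := hcomp.exists_isMinOn hne hΦcont
  have hmin : ∀ q ∈ simplex I, (∑ j, pen I (f j) qs) ≤ ∑ j, pen I (f j) q :=
    fun q hq => hqmin hq
  -- Step B : positivity of qs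
  have hpos : ∀ i, 0 < qs i := by
    by_contra hcon
    push_neg at hcon
    obtain ⟨k, hk⟩ := hcon
    have hk0 : qs k = 0 := le_antisymm hk (hqsm.1 k)
    have hm : ∃ m, 0 < qs m := by
      by_contra h2
      push_neg at h2
      have h3 : ∑ i, qs i = 0 := Finset.sum_eq_zero fun i _ => le_antisymm (h2 i) (hqsm.1 i)
      rw [hqsm.2] at h3; norm_num at h3
    obtain ⟨m, hm⟩ := hm
    have hmk : k ≠ m := by rintro rfl; rw [hk0] at hm; exact lt_irrefl _ hm
    have hm1 : qs m ≤ 1 := (hIcc qs hqsm m).2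
    set B : ℝ := ∑ j, f j m (qs m / 2) with hB
    have hev1 : ∀ᶠ ε in nhdsWithin (0:ℝ) (Set.Ioi 0), ∀ j, f j k ε ≤ -(|B| + 1) :=
      Filter.eventually_all.mpr fun j => (hlim j k).eventually (Filter.eventually_le_atBot _)
    have hev2 : ∀ᶠ ε in nhdsWithin (0:ℝ) (Set.Ioi 0), ε ∈ Set.Ioo (0:ℝ) (min (qs m / 2) 1) :=
      Filter.eventually_of_mem
        (Ioo_mem_nhdsGT_of_mem ⟨le_refl 0, lt_min (by linarith) one_pos⟩) (fun x hx => hx)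
    obtain ⟨ε, hεf, hεo⟩ := (hev1.and hev2).exists
    have hε0 : 0 < ε := hεo.1
    have hεm : ε < qs m / 2 := lt_of_lt_of_le hεo.2 (min_le_left _ _)
    have hε1 : ε < 1 := lt_of_lt_of_le hεo.2 (min_le_right _ _)
    set q' := fun i => qs i + (if i = k then ε else 0) - (if i = m then ε else 0) with hq'
    have hq'm : q' ∈ simplex I := shift_mem hqsm hmk hε0.le (by linarith)
    have hbound : ∀ j, pen I (f j) q' - pen I (f j) qs
        ≤ ε * f j k ε - ε * f j m (qs m / 2) := by
      intro j
      rw [pen_shift (f j) qs hmk ε]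
      have hd1 : penaltyA (f j k) (qs k + ε) - penaltyA (f j k) (qs k) ≤ ε * f j k ε := by
        rw [penA_diff (hint j k) (hIcc qs hqsm k) ⟨by linarith [hqsm.1 k], by
          rw [hk0]; linarith⟩, hk0, zero_add]
        exact small_int (hmono j k) (hint j k) ⟨hε0, hε1.le⟩
      have hd2 : penaltyA (f j m) (qs m - ε) - penaltyA (f j m) (qs m)
          ≤ -(ε * f j m (qs m / 2)) := by
        rw [penA_diff (hint j m) (hIcc qs hqsm m) ⟨by linarith, by linarith⟩]
        have hc1 : (qs m - (qs m - ε)) * f j m (qs m - ε)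
            ≤ ∫ s in (qs m - ε)..(qs m), f j m s :=
          conv_le (hmono j m) (hint j m) ⟨by linarith, by linarith⟩ (hIcc qs hqsm m)
        have hc2 : f j m (qs m / 2) ≤ f j m (qs m - ε) :=
          (hmono j m).monotoneOn ⟨by linarith, by linarith⟩ ⟨by linarith, by linarith⟩
            (by linarith)
        rw [intervalIntegral.integral_symm]
        have hc3 : ε * f j m (qs m / 2) ≤ ∫ s in (qs m - ε)..(qs m), f j m s := by
          nlinarith
        linarith
      linarith
    have hsb : ∑ j, (ε * f j k ε - ε * f j m (qs m / 2))
        ≤ ε * ((↑(J+1)) * (-(|B| + 1))) - ε * B := by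
      rw [Finset.sum_sub_distrib, ← Finset.mul_sum, ← Finset.mul_sum, ← hB]
      have h4 : ∑ j, f j k ε ≤ ∑ j : Fin (J+1), (-(|B| + 1)) :=
        Finset.sum_le_sum fun j _ => hεf j
      rw [Finset.sum_const, Finset.card_univ, Fintype.card_fin, nsmul_eq_mul] at h4
      have := mul_le_mul_of_nonneg_left h4 hε0.le
      linarith
    have hneg : ε * ((↑(J+1)) * (-(|B| + 1))) - ε * B < 0 := by
      have hJ : (1:ℝ) ≤ (↑(J+1) : ℝ) := by exact_mod_cast Nat.one_le_iff_ne_zero.mpr (by omega)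
      have habs : B ≤ |B| := le_abs_self B
      nlinarith [abs_nonneg B, mul_nonneg hε0.le (by linarith [neg_abs_le B] : (0:ℝ) ≤ |B| + B),
        mul_nonneg (mul_nonneg hε0.le (by linarith : (0:ℝ) ≤ (↑(J+1):ℝ) - 1))
          (by positivity : (0:ℝ) ≤ |B| + 1)]
    have hfin : ∑ j, pen I (f j) q' < ∑ j, pen I (f j) qs := by
      have h5 : ∑ j, (pen I (f j) q' - pen I (f j) qs)
          ≤ ∑ j, (ε * f j k ε - ε * f j m (qs m / 2)) :=
        Finset.sum_le_sum fun j _ => hbound j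
      rw [Finset.sum_sub_distrib] at h5
      linarith
    exact absurd (hmin q' hq'm) (not_le.mpr hfin)
  have hlt1 : ∀ i, qs i < 1 := by
    intro i
    obtain ⟨k, hki⟩ := Fintype.exists_ne_of_one_lt_card (by simp; omega) i
    have hle : qs i + qs k ≤ 1 := by
      rw [← hqsm.2, ← Finset.sum_pair (Ne.symm hki)]
      exact Finset.sum_le_sum_of_subset_of_nonneg (Finset.subset_univ _)
        (fun x _ _ => hqsm.1 x)
    linarith [hpos k]
  have hIoc : ∀ i, qs i ∈ Set.Ioc (0:ℝ) 1 := fun i => ⟨hpos i, (hlt1 i).le⟩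
  have hIccq : ∀ i, qs i ∈ Set.Icc (0:ℝ) 1 := fun i => ⟨(hpos i).le, (hlt1 i).le⟩
  have hcAt : ∀ j i, ContinuousAt (f j i) (qs i) := by
    intro j i
    exact (hdiff j i).continuousOn.continuousAt (Ioc_mem_nhds (hpos i) (hlt1 i))
  set F : Fin I → ℝ := fun i => ∑ j, f j i (qs i) with hFdef
  -- Step C: KKT, F is constant
  have hFeq : ∀ i k, F i = F k := by
    suffices h : ∀ i k, i ≠ k → F k ≤ F i by
      intro i k
      rcases eq_or_ne i k with rfl | hik
      · rfl
      · exact le_antisymm (h k i (Ne.symm hik)) (h i k hik)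
    intro i k hik
    set ψ : ℝ → ℝ := fun ε => (∑ j, f j i (qs i + ε)) - ∑ j, f j k (qs k - ε) with hψ
    have hten : Filter.Tendsto ψ (nhdsWithin 0 (Set.Ioi 0)) (nhds (F i - F k)) := by
      have h1 : Filter.Tendsto (fun ε : ℝ => qs i + ε) (nhds 0) (nhds (qs i)) := by
        have : Filter.Tendsto (fun ε : ℝ => qs i + ε) (nhds 0) (nhds (qs i + 0)) :=
          tendsto_const_nhds.add Filter.tendsto_id
        simpa using this
      have h2 : Filter.Tendsto (fun ε : ℝ => qs k - ε) (nhds 0) (nhds (qs k)) := by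
        have : Filter.Tendsto (fun ε : ℝ => qs k - ε) (nhds 0) (nhds (qs k - 0)) :=
          tendsto_const_nhds.sub Filter.tendsto_id
        simpa using this
      have hA : Filter.Tendsto (fun ε => ∑ j, f j i (qs i + ε)) (nhds 0) (nhds (F i)) :=
        tendsto_finset_sum _ (fun j _ => (hcAt j i).tendsto.comp h1)
      have hB2 : Filter.Tendsto (fun ε => ∑ j, f j k (qs k - ε)) (nhds 0) (nhds (F k)) :=
        tendsto_finset_sum _ (fun j _ => (hcAt j k).tendsto.comp h2)
      exact (hA.sub hB2).mono_left nhdsWithin_le_nhds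
    have hev : ∀ᶠ ε in nhdsWithin (0:ℝ) (Set.Ioi 0), 0 ≤ ψ ε := by
      have hmem : Set.Ioo (0:ℝ) (min (qs k) (1 - qs i)) ∈ nhdsWithin (0:ℝ) (Set.Ioi 0) :=
        Ioo_mem_nhdsGT_of_mem ⟨le_refl 0, lt_min (hpos k) (by linarith [hlt1 i])⟩
      filter_upwards [hmem] with ε hε
      obtain ⟨hε0, hεlt⟩ := hε
      have hεk : ε < qs k := lt_of_lt_of_le hεlt (min_le_left _ _)
      have hεi : qs i + ε < 1 := by
        have := lt_of_lt_of_le hεlt (min_le_right _ _); linarith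
      set q' := fun i' => qs i' + (if i' = i then ε else 0) - (if i' = k then ε else 0)
        with hq'
      have hq'm : q' ∈ simplex I := shift_mem hqsm hik hε0.le hεk.le
      have h0 : (0:ℝ) ≤ ∑ j, pen I (f j) q' - ∑ j, pen I (f j) qs :=
        sub_nonneg.mpr (hmin q' hq'm)
      have hb : ∀ j, pen I (f j) q' - pen I (f j) qs
          ≤ ε * f j i (qs i + ε) - ε * f j k (qs k - ε) := by
        intro j
        rw [pen_shift (f j) qs hik ε]
        have hup : penaltyA (f j i) (qs i + ε) - penaltyA (f j i) (qs i)
            ≤ ε * f j i (qs i + ε) := by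
          rw [penA_diff (hint j i) (hIccq i) ⟨by linarith [hpos i], hεi.le⟩]
          have := conv_le (hmono j i) (hint j i) (a := qs i + ε) (b := qs i)
            ⟨by linarith [hpos i], hεi.le⟩ (hIccq i)
          rw [intervalIntegral.integral_symm] at this
          nlinarith
        have hlo : penaltyA (f j k) (qs k - ε) - penaltyA (f j k) (qs k)
            ≤ -(ε * f j k (qs k - ε)) := by
          rw [penA_diff (hint j k) (hIccq k) ⟨by linarith, by linarith [hlt1 k]⟩]
          have := conv_le (hmono j k) (hint j k) (a := qs k - ε) (b := qs k)
            ⟨by linarith, by linarith [hlt1 k]⟩ (hIccq k)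
          rw [intervalIntegral.integral_symm] at this
          nlinarith
        linarith
      have hs : ∑ j, pen I (f j) q' - ∑ j, pen I (f j) qs
          ≤ ε * ψ ε := by
        have h5 : ∑ j, (pen I (f j) q' - pen I (f j) qs)
            ≤ ∑ j, (ε * f j i (qs i + ε) - ε * f j k (qs k - ε)) :=
          Finset.sum_le_sum fun j _ => hb j
        rw [Finset.sum_sub_distrib] at h5
        have h6 : ∑ j, (ε * f j i (qs i + ε) - ε * f j k (qs k - ε)) = ε * ψ ε := by
          rw [hψ]
          rw [Finset.sum_sub_distrib, ← Finset.mul_sum, ← Finset.mul_sum]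
          ring
        linarith
      exact nonneg_of_mul_nonneg_right (le_trans h0 hs) hε0
    exact sub_nonneg.mp (ge_of_tendsto hten hev)
  -- key convexity inequality
  have hkey : ∀ j, ∀ q ∈ simplex I,
      (∑ i, (q i - qs i) * f j i (qs i)) ≤ pen I (f j) q - pen I (f j) qs := by
    intro j q hq
    have hd : pen I (f j) q - pen I (f j) qs
        = ∑ i, (penaltyA (f j i) (q i) - penaltyA (f j i) (qs i)) :=
      (Finset.sum_sub_distrib _ _).symm
    rw [hd]
    apply Finset.sum_le_sum
    intro i _
    rw [show penaltyA (f j i) (q i) - penaltyA (f j i) (qs i)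
        = ∫ s in (qs i)..(q i), f j i s from penA_diff (hint j i) (hIccq i) (hIcc q hq i)]
    exact conv_le (hmono j i) (hint j i) (hIoc i) (hIcc q hq i)
  -- uniqueness of the minimizer
  have huniq : ∀ q ∈ simplex I,
      (∑ j, pen I (f j) q) = (∑ j, pen I (f j) qs) → q = qs := by
    intro q hq heq
    by_contra hneq
    obtain ⟨k, hk⟩ : ∃ k, qs k < q k := by
      by_contra h2
      push_neg at h2
      apply hneq
      funext i
      have hsum : ∑ i, q i = ∑ i, qs i := by rw [hq.2, hqsm.2]
      exact (Finset.sum_eq_sum_iff_of_le (fun i _ => h2 i)).mp hsum i (Finset.mem_univ i)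
    have hstrict : (0:ℝ) < ∑ j, (pen I (f j) q - pen I (f j) qs) := by
      have e1 : ∀ j, pen I (f j) q - pen I (f j) qs
          = ∑ i, ∫ s in (qs i)..(q i), f j i s := by
        intro j
        rw [show pen I (f j) q - pen I (f j) qs
            = ∑ i, (penaltyA (f j i) (q i) - penaltyA (f j i) (qs i)) from
          (Finset.sum_sub_distrib _ _).symm]
        exact Finset.sum_congr rfl fun i _ => penA_diff (hint j i) (hIccq i) (hIcc q hq i)
      have e2 : ∑ j, (pen I (f j) q - pen I (f j) qs)
          = ∑ i, ∑ j, ∫ s in (qs i)..(q i), f j i s := by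
        rw [Finset.sum_congr rfl fun j _ => e1 j]
        exact Finset.sum_comm
      rw [e2]
      have e3 : (0:ℝ) = ∑ i, (q i - qs i) * F i := by
        have e4 : ∀ i, (q i - qs i) * F i = (q i - qs i) * F k := fun i => by rw [hFeq i k]
        rw [Finset.sum_congr rfl fun i _ => e4 i, ← Finset.sum_mul]
        have e5 : ∑ i, (q i - qs i) = 0 := by
          rw [Finset.sum_sub_distrib, hq.2, hqsm.2]; ring
        rw [e5, zero_mul]
      rw [e3]
      apply Finset.sum_lt_sum
      · intro i _
        rw [hFdef, Finset.mul_sum]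
        exact Finset.sum_le_sum fun j _ =>
          conv_le (hmono j i) (hint j i) (hIoc i) (hIcc q hq i)
      · refine ⟨k, Finset.mem_univ k, ?_⟩
        rw [hFdef, Finset.mul_sum]
        exact Finset.sum_lt_sum_of_nonempty Finset.univ_nonempty (fun j _ =>
          conv_lt (hmono j k) (hint j k) (hIoc k) (hIcc q hq k).2 hk)
    rw [Finset.sum_sub_distrib] at hstrict
    linarith
  -- bddAbove of the rho sets
  have hbdd : ∀ (j : Fin (J+1)) (x : Fin I → ℝ),
      BddAbove {v : ℝ | ∃ q ∈ simplex I, v = -(∑ i, q i * x i) - pen I (f j) q} := by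
    intro j x
    have himg : {v : ℝ | ∃ q ∈ simplex I, v = -(∑ i, q i * x i) - pen I (f j) q}
        = (fun q => -(∑ i, q i * x i) - pen I (f j) q) '' simplex I := by
      ext v
      constructor
      · rintro ⟨q, hq, rfl⟩; exact ⟨q, hq, rfl⟩
      · rintro ⟨q, hq, rfl⟩; exact ⟨q, hq, rfl⟩
    rw [himg]
    refine IsCompact.bddAbove (hcomp.image_of_continuousOn ?_)
    apply ContinuousOn.sub
    · apply ContinuousOn.neg
      apply continuousOn_finset_sum
      intro i _
      exact ((continuous_apply i).mul continuous_const).continuousOn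
    · exact hpencont (f j) (hint j)
  have hlb : ∀ (j : Fin (J+1)) (x : Fin I → ℝ),
      -(∑ i, qs i * x i) - pen I (f j) qs ≤ rho I (f j) x :=
    fun j x => le_csSup (hbdd j x) ⟨qs, hqsm, rfl⟩
  -- value of the lower-bound sum at a feasible allocation
  have hfeasval : ∀ xs : Fin (J + 1) → Fin I → ℝ, (∑ j, xs j) = c • (1 : Fin I → ℝ) →
      (∑ j, (-(∑ i, qs i * xs j i) - pen I (f j) qs)) = -c - ∑ j, pen I (f j) qs := by
    intro xs hxs
    rw [Finset.sum_sub_distrib]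
    congr 1
    have hxi : ∀ i, ∑ j, xs j i = c := by
      intro i
      have := congrFun hxs i
      simpa using this
    have h7 : ∑ j, ∑ i, qs i * xs j i = c := by
      rw [Finset.sum_comm]
      calc ∑ i, ∑ j, qs i * xs j i = ∑ i, qs i * ∑ j, xs j i := by
            exact Finset.sum_congr rfl fun i _ => (Finset.mul_sum _ _ _).symm
        _ = ∑ i, qs i * c := Finset.sum_congr rfl fun i _ => by rw [hxi i]
        _ = (∑ i, qs i) * c := (Finset.sum_mul _ _ _).symm
        _ = c := by rw [hqsm.2, one_mul]
    rw [Finset.sum_neg_distrib, h7]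
  -- attainment: sup of each rho at qs for the canonical allocation
  have hub : ∀ (j : Fin (J+1)) (x : Fin I → ℝ), (∃ l : ℝ, ∀ i, x i = l - f j i (qs i)) →
      IsGreatest {v : ℝ | ∃ q ∈ simplex I, v = -(∑ i, q i * x i) - pen I (f j) q}
        (-(∑ i, qs i * x i) - pen I (f j) qs) := by
    rintro j x ⟨l, hl⟩
    refine ⟨⟨qs, hqsm, rfl⟩, ?_⟩
    rintro v ⟨q, hq, rfl⟩
    have h1 := hkey j q hq
    have h2 : (∑ i, qs i * x i) - (∑ i, q i * x i) = ∑ i, (q i - qs i) * f j i (qs i) := by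
      have h3 : ∀ i, qs i * x i - q i * x i
          = (qs i - q i) * l - (qs i - q i) * f j i (qs i) := by
        intro i; rw [hl i]; ring
      rw [← Finset.sum_sub_distrib, Finset.sum_congr rfl fun i _ => h3 i,
        Finset.sum_sub_distrib, ← Finset.sum_mul]
      have hz : ∑ i, (qs i - q i) = 0 := by
        rw [Finset.sum_sub_distrib, hq.2, hqsm.2]; ring
      rw [hz, zero_mul, zero_sub, ← Finset.sum_neg_distrib]
      exact Finset.sum_congr rfl fun i _ => by ring
    linarith
  set i0 : Fin I := ⟨0, hI0⟩ with hi0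
  set xs0 : Fin (J+1) → Fin I → ℝ :=
    fun j i => (if j = 0 then c + F i0 else 0) - f j i (qs i) with hxs0
  have hfeas : (∑ j, xs0 j) = c • (1 : Fin I → ℝ) := by
    funext i
    simp only [Finset.sum_apply, hxs0, Pi.smul_apply, Pi.one_apply, smul_eq_mul, mul_one]
    rw [Finset.sum_sub_distrib]
    have h8 : ∑ j : Fin (J+1), (if j = 0 then c + F i0 else 0) = c + F i0 := by
      simp [Finset.sum_ite_eq' Finset.univ (0 : Fin (J+1))]
    rw [h8, show ∑ j, f j i (qs i) = F i from rfl, hFeq i i0]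
    ring
  have hrho0 : ∀ j, rho I (f j) (xs0 j) = -(∑ i, qs i * xs0 j i) - pen I (f j) qs := by
    intro j
    exact (hub j (xs0 j) ⟨(if j = 0 then c + F i0 else 0), fun i => rfl⟩).csSup_eq
  refine ⟨qs, hqsm, hmin, huniq, ?_, ?_⟩
  · constructor
    · rintro v ⟨xs, hxs, rfl⟩
      have h9 : ∀ j, -(∑ i, qs i * xs j i) - pen I (f j) qs ≤ rho I (f j) (xs j) :=
        fun j => hlb j (xs j)
      have h10 := Finset.sum_le_sum (fun j (_ : j ∈ Finset.univ) => h9 j)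
      rw [hfeasval xs hxs] at h10
      exact h10
    · intro b hb
      refine hb ⟨xs0, hfeas, ?_⟩
      rw [Finset.sum_congr rfl fun j _ => hrho0 j, hfeasval xs0 hfeas]
  · intro xs hxs hopt j0
    have hle : ∀ j, -(∑ i, qs i * xs j i) - pen I (f j) qs ≤ rho I (f j) (xs j) :=
      fun j => hlb j (xs j)
    have hsumv : ∑ j, (-(∑ i, qs i * xs j i) - pen I (f j) qs)
        = ∑ j, rho I (f j) (xs j) := by
      rw [hfeasval xs hxs, hopt]
    have heach : ∀ j, rho I (f j) (xs j) = -(∑ i, qs i * xs j i) - pen I (f j) qs := by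
      intro j
      by_contra hne2
      have hltj : -(∑ i, qs i * xs j i) - pen I (f j) qs < rho I (f j) (xs j) :=
        lt_of_le_of_ne (hle j) (fun h => hne2 h.symm)
      have h11 : ∑ j, (-(∑ i, qs i * xs j i) - pen I (f j) qs)
          < ∑ j, rho I (f j) (xs j) :=
        Finset.sum_lt_sum (fun j _ => hle j) ⟨j, Finset.mem_univ j, hltj⟩
      linarith [hsumv]
    constructor
    · exact ⟨qs, hqsm, rfl⟩
    · rintro w ⟨q, hq, rfl⟩
      calc -(∑ i, q i * xs j0 i) - pen I (f j0) q ≤ rho I (f j0) (xs j0) :=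
            le_csSup (hbdd j0 (xs j0)) ⟨q, hq, rfl⟩
        _ = -(∑ i, qs i * xs j0 i) - pen I (f j0) qs := heach j0
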